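/- If f(z₁,z₂) ∈ V[[z₁,z₁^{-1}]]((z₂)), then δ((z₀+z₂)/z₁) · f(z₁,z₂) = δ((z₀+z₂)/z₁) · f(z₀+z₂, z₂), where f(z₀+z₂,z₂) is obtained by formally substituting z₀+z₂ for z₁ with (z₀+z₂)^n expanded in nonnegative powers of z₂. -/

import Mathlib

/-- The generalized binomial coefficient `C(x, k) = x(x-1)⋯(x-k+1)/k!` for `x ∈ ℂ`. -/
noncomputable def cchoose (x : ℂ) (k : ℕ) : ℂ :=
  (∏ i ∈ Finset.range k, (x - i)) / (Nat.factorial k : ℂ)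

lemma descPoch_eval (x : ℂ) (k : ℕ) :
    (descPochhammer ℂ k).eval x = ∏ i ∈ Finset.range k, (x - i) := by
  induction k with
  | zero => simp
  | succ n ih =>
      rw [descPochhammer_succ_right, Finset.prod_range_succ, ← ih]
      simp [mul_comm]

lemma cchoose_eq (x : ℂ) (k : ℕ) : cchoose x k = Ring.choose x k := by
  have h := Ring.descPochhammer_eq_factorial_smul_choose x k
  have h2 : (descPochhammer ℤ k).smeval x = (descPochhammer ℂ k).eval x := by
    rw [← Polynomial.aeval_eq_smeval, Polynomial.aeval_def, Polynomial.eval₂_eq_eval_map,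
      descPochhammer_map]
  rw [h2, descPoch_eval] at h
  rw [cchoose, h, nsmul_eq_mul]
  exact mul_div_cancel_left₀ _ (Nat.cast_ne_zero.mpr (Nat.factorial_ne_zero k))

/-- Chu–Vandermonde for `cchoose`. -/
lemma cchoose_vandermonde (x y : ℂ) (n : ℕ) :
    ∑ p ∈ Finset.HasAntidiagonal.antidiagonal n, cchoose x p.1 * cchoose y p.2 = cchoose (x + y) n := by
  simp_rw [cchoose_eq]
  exact (Ring.add_choose_eq n (Commute.all x y)).symm

/-- Summing over a triangle equals summing over a square when terms outside
the triangle vanish. -/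
lemma sum_triangle {β : Type*} [AddCommMonoid β] (M : ℕ) (h : ℕ → ℕ → β)
    (hz : ∀ k m : ℕ, M ≤ k + m → h k m = 0) :
    ∑ n ∈ Finset.range M, ∑ p ∈ Finset.HasAntidiagonal.antidiagonal n, h p.1 p.2
      = ∑ k ∈ Finset.range M, ∑ m ∈ Finset.range M, h k m := by
  classical
  rw [← Finset.sum_product', Finset.sum_sigma']
  rw [← Finset.sum_filter_add_sum_filter_not (Finset.range M ×ˢ Finset.range M)
    (fun p => p.1 + p.2 < M) (fun p => h p.1 p.2)]
  have hzero : ∑ p ∈ (Finset.range M ×ˢ Finset.range M).filter (fun p => ¬ p.1 + p.2 < M),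
      h p.1 p.2 = 0 := by
    apply Finset.sum_eq_zero
    intro p hp
    exact hz p.1 p.2 (le_of_not_gt (Finset.mem_filter.mp hp).2)
  rw [hzero, add_zero]
  refine Finset.sum_nbij' (fun x => x.2) (fun p => ⟨p.1 + p.2, p⟩) ?_ ?_ ?_ ?_ ?_
  · intro x hx
    simp only [Finset.mem_sigma, Finset.mem_range, Finset.HasAntidiagonal.mem_antidiagonal] at hx
    simp only [Finset.mem_filter, Finset.mem_product, Finset.mem_range]
    refine ⟨⟨?_, ?_⟩, ?_⟩ <;> omega
  · intro p hp
    simp only [Finset.mem_filter, Finset.mem_product, Finset.mem_range] at hp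
    simp only [Finset.mem_sigma, Finset.mem_range, Finset.HasAntidiagonal.mem_antidiagonal]
    exact ⟨hp.2, trivial⟩
  · intro x hx
    simp only [Finset.mem_sigma, Finset.mem_range, Finset.HasAntidiagonal.mem_antidiagonal] at hx
    exact Sigma.ext hx.2 (heq_of_eq rfl)
  · intro p _; rfl
  · intro x _; rfl

/-- [FLM] Lemma 2.1: for `f(z₁,z₂) ∈ V[[z₁,z₁⁻¹]]((z₂))`,
`δ((z₀+z₂)/z₁) f(z₁,z₂) = δ((z₀+z₂)/z₁) f(z₀+z₂, z₂)`.
Here `f` is given by its coefficients `f i j` of `z₁^i z₂^j`, truncated below in `z₂`;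
`δ((z₀+z₂)/z₁) = ∑_{n∈ℤ} ∑_{k∈ℕ} C(n,k) z₀^{n-k} z₂^k z₁^{-n}` and in `f(z₀+z₂,z₂)`
each `(z₀+z₂)^i` is expanded in nonnegative powers of `z₂`.  Equality is asserted
for the coefficient of every monomial `z₀^a z₁^b z₂^c`. -/
theorem stmt3 (V : Type*) [AddCommGroup V] [Module ℂ V]
    (f : ℤ → ℤ → V)
    (htrunc : ∃ N : ℤ, ∀ i j : ℤ, j < N → f i j = 0) :
    ∀ a b c : ℤ,
      (∑ᶠ k : ℕ, cchoose ((a + k : ℤ) : ℂ) k • f (b + a + k) (c - k))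
        = ∑ᶠ k : ℕ, ∑ᶠ m : ℕ,
            (cchoose ((-b : ℤ) : ℂ) k * cchoose ((a + b + k + m : ℤ) : ℂ) m) •
              f (a + b + k + m) (c - k - m) := by
  obtain ⟨N, hN⟩ := htrunc
  intro a b c
  set M : ℕ := (c - N + 1).toNat with hM
  have hMle : ∀ k : ℕ, M ≤ k → ∀ i : ℤ, f i (c - k) = 0 := by
    intro k hk i
    apply hN
    have := Int.self_le_toNat (c - N + 1)
    omega
  -- convert LHS to a finite sum
  have hL : (∑ᶠ k : ℕ, cchoose ((a + k : ℤ) : ℂ) k • f (b + a + k) (c - k))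
      = ∑ k ∈ Finset.range M, cchoose ((a + k : ℤ) : ℂ) k • f (b + a + k) (c - k) := by
    apply finsum_eq_sum_of_support_subset
    intro k hk
    simp only [Function.mem_support] at hk
    by_contra hkM
    simp only [Finset.coe_range, Set.mem_Iio, not_lt] at hkM
    exact hk (by rw [hMle k hkM, smul_zero])
  -- convert RHS to a finite double sum
  have hInner : ∀ k : ℕ, (∑ᶠ m : ℕ,
      (cchoose ((-b : ℤ) : ℂ) k * cchoose ((a + b + k + m : ℤ) : ℂ) m) •
        f (a + b + k + m) (c - k - m))
      = ∑ m ∈ Finset.range M,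
        (cchoose ((-b : ℤ) : ℂ) k * cchoose ((a + b + k + m : ℤ) : ℂ) m) •
          f (a + b + k + m) (c - k - m) := by
    intro k
    apply finsum_eq_sum_of_support_subset
    intro m hm
    simp only [Function.mem_support] at hm
    by_contra hmM
    simp only [Finset.coe_range, Set.mem_Iio, not_lt] at hmM
    have : f (a + b + k + m) (c - k - m) = 0 := by
      have h1 : (c : ℤ) - k - m = c - (k + m : ℕ) := by push_cast; ring
      rw [h1]
      exact hMle (k + m) (le_add_left hmM) _
    exact hm (by rw [this, smul_zero])
  have hR : (∑ᶠ k : ℕ, ∑ᶠ m : ℕ,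
      (cchoose ((-b : ℤ) : ℂ) k * cchoose ((a + b + k + m : ℤ) : ℂ) m) •
        f (a + b + k + m) (c - k - m))
      = ∑ k ∈ Finset.range M, ∑ m ∈ Finset.range M,
          (cchoose ((-b : ℤ) : ℂ) k * cchoose ((a + b + k + m : ℤ) : ℂ) m) •
            f (a + b + k + m) (c - k - m) := by
    rw [finsum_congr hInner]
    apply finsum_eq_sum_of_support_subset
    intro k hk
    simp only [Function.mem_support] at hk
    by_contra hkM
    simp only [Finset.coe_range, Set.mem_Iio, not_lt] at hkM
    apply hk
    apply Finset.sum_eq_zero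
    intro m _
    have : f (a + b + k + m) (c - k - m) = 0 := by
      have h1 : (c : ℤ) - k - m = c - (k + m : ℕ) := by push_cast; ring
      rw [h1]
      exact hMle (k + m) (le_add_right hkM) _
    rw [this, smul_zero]
  rw [hL, hR]
  rw [← sum_triangle M (fun k m =>
      (cchoose ((-b : ℤ) : ℂ) k * cchoose ((a + b + k + m : ℤ) : ℂ) m) •
        f (a + b + k + m) (c - k - m))
    (by
      intro k m hkm
      have h1 : (c : ℤ) - k - m = c - (k + m : ℕ) := by push_cast; ring
      rw [h1, hMle (k + m) hkm, smul_zero])]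
  apply Finset.sum_congr rfl
  intro n _
  have hstep : ∀ p ∈ Finset.HasAntidiagonal.antidiagonal n,
      (cchoose ((-b : ℤ) : ℂ) p.1 * cchoose ((a + b + p.1 + p.2 : ℤ) : ℂ) p.2) •
        f (a + b + p.1 + p.2) (c - p.1 - p.2)
      = (cchoose ((-b : ℤ) : ℂ) p.1 * cchoose ((a + b + n : ℤ) : ℂ) p.2) •
        f (a + b + n) (c - n) := by
    intro p hp
    have hpn : p.1 + p.2 = n := Finset.HasAntidiagonal.mem_antidiagonal.mp hp
    have h1 : (a : ℤ) + b + p.1 + p.2 = a + b + n := by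
      have : ((p.1 : ℤ) + p.2) = (n : ℤ) := by exact_mod_cast congrArg Nat.cast hpn
      omega
    have h2 : (c : ℤ) - p.1 - p.2 = c - n := by
      have : ((p.1 : ℤ) + p.2) = (n : ℤ) := by exact_mod_cast congrArg Nat.cast hpn
      omega
    rw [h1, h2]
  rw [Finset.sum_congr rfl hstep, ← Finset.sum_smul]
  have hvand : ∑ p ∈ Finset.HasAntidiagonal.antidiagonal n,
      cchoose ((-b : ℤ) : ℂ) p.1 * cchoose ((a + b + n : ℤ) : ℂ) p.2
      = cchoose ((a + n : ℤ) : ℂ) n := by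
    rw [cchoose_vandermonde]
    congr 1
    push_cast
    ring
  rw [hvand]
  congr 2
  omega
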